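/- Let s ≥ 1 and 1 ≤ k ≤ n. For every matrix R ∈ F^(s×n), the number of message matrices M ∈ F^(s×k) whose codeword C(M) = M·λ_k(β)_a⃗ satisfies (s+1)·wt_ΣR(R − C(M)) < s·(n − k + 1) is at most q^(m·k·(s−1)). -/

import Mathlib

namespace Stmt14

/-- `genNorm σ a i = σ^(i-1)(a) ⋯ σ(a) · a`, the generalized power function `N_i(a)`. -/
def genNorm {F : Type} [Field F] (σ : F ≃+* F) (a : F) : ℕ → F
  | 0 => 1
  | i + 1 => (⇑σ)^[i] a * genNorm σ a i

/-- Generalized operator `D_a^i(b) = σ^i(b) · N_i(a)` for `i ∈ ℕ`. -/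
def opev {F : Type} [Field F] (σ : F ≃+* F) (a b : F) (i : ℕ) : F :=
  (⇑σ)^[i] b * genNorm σ a i

/-- `b` is σ-conjugate to `a`, i.e. `b = σ(c)·a·c⁻¹` for some nonzero `c`. -/
def SConj {F : Type} [Field F] (σ : F ≃+* F) (a b : F) : Prop :=
  ∃ c : F, c ≠ 0 ∧ b = σ c * a * c⁻¹

/-- σ-generalized Moore matrix `λ_d(x)_a⃗` w.r.t. the length partition `nn`:
its row `r` applies `D_{a_i}^r` entrywise to the `i`-th block of `x`. -/
def moore {F : Type} [Field F] (σ : F ≃+* F) {ℓ : ℕ} (nn : Fin ℓ → ℕ) (aa : Fin ℓ → F)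
    (d : ℕ) (x : (Σ i : Fin ℓ, Fin (nn i)) → F) :
    Matrix (Fin d) (Σ i : Fin ℓ, Fin (nn i)) F :=
  Matrix.of fun r p => opev σ (aa p.1) (x p) (r : ℕ)

/-- `λ_d(X)_a⃗` for a matrix `X`: the stack of `λ_d(x_j)_a⃗` over the rows of `X`. -/
def mooreMat {F : Type} [Field F] (σ : F ≃+* F) {ℓ : ℕ} (nn : Fin ℓ → ℕ) (aa : Fin ℓ → F)
    {s : ℕ} (d : ℕ) (X : Matrix (Fin s) (Σ i : Fin ℓ, Fin (nn i)) F) :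
    Matrix (Fin s × Fin d) (Σ i : Fin ℓ, Fin (nn i)) F :=
  Matrix.of fun r p => opev σ (aa p.1) (X r.1 p) (r.2 : ℕ)

/-- `rk_q` of a vector: the `K`-dimension of the `K`-span of its entries. -/
noncomputable def rkq (K : Type) [Field K] {F : Type} [Field F] [Algebra K F] {ι : Type}
    (v : ι → F) : ℕ :=
  Module.finrank K (Submodule.span K (Set.range v))

/-- `rk_q` of a matrix: the `K`-dimension of the `K`-span of its columns. -/
noncomputable def rkqMat (K : Type) [Field K] {F : Type} [Field F] [Algebra K F]
    {s : ℕ} {ι : Type} (X : Matrix (Fin s) ι F) : ℕ :=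
  Module.finrank K (Submodule.span K (Set.range fun j : ι => fun r : Fin s => X r j))

/-- Sum-rank weight of a blockwise vector. -/
noncomputable def wtV (K : Type) [Field K] {F : Type} [Field F] [Algebra K F] {ℓ : ℕ}
    (nn : Fin ℓ → ℕ) (x : (Σ i : Fin ℓ, Fin (nn i)) → F) : ℕ :=
  ∑ i, rkq K fun μ : Fin (nn i) => x ⟨i, μ⟩

/-- Sum-rank weight of a blockwise matrix. -/
noncomputable def wtM (K : Type) [Field K] {F : Type} [Field F] [Algebra K F] {s ℓ : ℕ}
    (nn : Fin ℓ → ℕ) (X : Matrix (Fin s) (Σ i : Fin ℓ, Fin (nn i)) F) : ℕ :=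
  ∑ i, rkqMat K (Matrix.of fun (r : Fin s) (μ : Fin (nn i)) => X r ⟨i, μ⟩)

/-- Codeword `C(M) = M · λ_k(β)_a⃗` of the `s`-interleaved linearized Reed–Solomon code. -/
def codeword {F : Type} [Field F] (σ : F ≃+* F) {ℓ : ℕ} (nn : Fin ℓ → ℕ) (aa : Fin ℓ → F)
    (β : (Σ i : Fin ℓ, Fin (nn i)) → F) {s : ℕ} (k : ℕ) (M : Matrix (Fin s) (Fin k) F) :
    Matrix (Fin s) (Σ i : Fin ℓ, Fin (nn i)) F :=
  M * moore σ nn aa k β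

section Basic
variable {F : Type} [Field F] (σ : F ≃+* F)

lemma iter_add (j : ℕ) (x y : F) : (⇑σ)^[j] (x + y) = (⇑σ)^[j] x + (⇑σ)^[j] y := by
  induction j generalizing x y with
  | zero => rfl
  | succ t ih => simp [Function.iterate_succ_apply, map_add, ih]

lemma iter_mul (j : ℕ) (x y : F) : (⇑σ)^[j] (x * y) = (⇑σ)^[j] x * (⇑σ)^[j] y := by
  induction j generalizing x y with
  | zero => rfl
  | succ t ih => simp [Function.iterate_succ_apply, map_mul, ih]

lemma iter_zero (j : ℕ) : (⇑σ)^[j] (0 : F) = 0 := by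
  induction j with
  | zero => rfl
  | succ t ih => simp [Function.iterate_succ_apply, ih]

lemma iter_sub (j : ℕ) (x y : F) : (⇑σ)^[j] (x - y) = (⇑σ)^[j] x - (⇑σ)^[j] y := by
  induction j generalizing x y with
  | zero => rfl
  | succ t ih => simp [Function.iterate_succ_apply, map_sub, ih]

lemma iter_one (j : ℕ) : (⇑σ)^[j] (1 : F) = 1 := by
  induction j with
  | zero => rfl
  | succ t ih => simp [Function.iterate_succ_apply, ih]

lemma iter_fixed (j : ℕ) {c : F} (hc : σ c = c) : (⇑σ)^[j] c = c := by
  induction j with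
  | zero => rfl
  | succ t ih => simp [Function.iterate_succ_apply, hc, ih]

lemma iter_eq_zero_iff (j : ℕ) (x : F) : (⇑σ)^[j] x = 0 ↔ x = 0 := by
  constructor
  · intro h
    induction j generalizing x with
    | zero => exact h
    | succ t ih =>
      rw [Function.iterate_succ_apply] at h
      exact (map_eq_zero_iff σ σ.injective).mp (ih _ h)
  · rintro rfl; exact iter_zero σ j

lemma opev_zero_idx (a b : F) : opev σ a b 0 = b := by
  simp [opev, genNorm]

lemma opev_succ (a b : F) (j : ℕ) : opev σ a b (j + 1) = opev σ a (σ b * a) j := by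
  simp only [opev, genNorm, iter_mul]
  rw [Function.iterate_succ_apply]
  ring

lemma opev_add (a b c : F) (j : ℕ) : opev σ a (b + c) j = opev σ a b j + opev σ a c j := by
  simp [opev, iter_add, add_mul]

lemma opev_sub (a b c : F) (j : ℕ) : opev σ a (b - c) j = opev σ a b j - opev σ a c j := by
  simp [opev, iter_sub, sub_mul]

lemma opev_zero_pt (a : F) (j : ℕ) : opev σ a 0 j = 0 := by
  simp [opev, iter_zero]

lemma opev_mul_left (a c b : F) (j : ℕ) :
    opev σ a (c * b) j = (⇑σ)^[j] c * opev σ a b j := by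
  simp [opev, iter_mul, mul_assoc]

lemma genNorm_add (a : F) (u v : ℕ) :
    genNorm σ a (u + v) = (⇑σ)^[u] (genNorm σ a v) * genNorm σ a u := by
  induction v with
  | zero => simp [genNorm, iter_one]
  | succ t ih =>
    have : u + (t + 1) = (u + t) + 1 := by ring
    rw [this]
    simp only [genNorm, iter_mul, ih]
    rw [← Function.iterate_add_apply]
    ring_nf

lemma opev_opev (a b : F) (u v : ℕ) :
    opev σ a (opev σ a b v) u = opev σ a b (u + v) := by
  simp only [opev, iter_mul, genNorm_add]
  rw [← Function.iterate_add_apply]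
  ring

/-- Evaluation of an operator polynomial with coefficients `f` (length `d`). -/
def ev (d : ℕ) (f : ℕ → F) (a y : F) : F := ∑ j ∈ Finset.range d, f j * opev σ a y j

lemma ev_add_pt (d : ℕ) (f : ℕ → F) (a y z : F) :
    ev σ d f a (y + z) = ev σ d f a y + ev σ d f a z := by
  simp [ev, opev_add, mul_add, Finset.sum_add_distrib]

lemma ev_sub_pt (d : ℕ) (f : ℕ → F) (a y z : F) :
    ev σ d f a (y - z) = ev σ d f a y - ev σ d f a z := by
  simp [ev, opev_sub, mul_sub, Finset.sum_sub_distrib]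

lemma ev_zero_pt (d : ℕ) (f : ℕ → F) (a : F) : ev σ d f a 0 = 0 := by
  simp [ev, opev_zero_pt]

lemma ev_mul_pt (d : ℕ) (f : ℕ → F) (a y : F) {c : F} (hc : σ c = c) :
    ev σ d f a (c * y) = c * ev σ d f a y := by
  simp only [ev, Finset.mul_sum]
  refine Finset.sum_congr rfl fun j _ => ?_
  rw [opev_mul_left, iter_fixed σ j hc]; ring

/-- Quotient upon division by `x - c` on the right. -/
def quot (f : ℕ → F) (c : F) (d : ℕ) (j : ℕ) : F :=
  ∑ t ∈ Finset.Ico (j + 1) d, f t * ∏ u ∈ Finset.Ico (j + 1) t, (⇑σ)^[u] c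

lemma quot_top (f : ℕ → F) (c : F) (d j : ℕ) (hj : d ≤ j + 1) : quot σ f c d j = 0 := by
  unfold quot
  rw [Finset.Ico_eq_empty (by omega)]
  simp

lemma quot_rec (f : ℕ → F) (c : F) (d : ℕ) (hf : ∀ t, d ≤ t → f t = 0) (j : ℕ) :
    quot σ f c d j = f (j + 1) + (⇑σ)^[j + 1] c * quot σ f c d (j + 1) := by
  by_cases h : j + 1 < d
  · unfold quot
    rw [Finset.sum_eq_sum_Ico_succ_bot h]
    rw [Finset.Ico_eq_empty (by omega : ¬ (j+1) < (j+1)), Finset.prod_empty, mul_one]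
    congr 1
    rw [Finset.mul_sum]
    refine Finset.sum_congr rfl fun t ht => ?_
    rw [Finset.mem_Ico] at ht
    rw [Finset.prod_eq_prod_Ico_succ_bot (by omega : j + 1 < t)]
    ring
  · rw [quot_top σ f c d j (by omega), quot_top σ f c d (j+1) (by omega), hf (j+1) (by omega)]
    simp

lemma quot_support (f : ℕ → F) (c : F) (d t : ℕ) (ht : d ≤ t + 1) : quot σ f c d t = 0 :=
  quot_top σ f c d t ht

/-- Division identity: `ev_{d+1} f a y = ev_d g a (σ(y)a - c y) + (f 0 + c g 0) y`. -/
lemma ev_quot (d : ℕ) (f : ℕ → F) (hf : ∀ t, d + 1 ≤ t → f t = 0) (a c y : F) :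
    ev σ (d + 1) f a y =
      ev σ d (quot σ f c (d + 1)) a (σ y * a - c * y)
        + (f 0 + c * quot σ f c (d + 1) 0) * y := by
  set g := quot σ f c (d + 1) with hg
  have hrec : ∀ j, g j = f (j + 1) + (⇑σ)^[j + 1] c * g (j + 1) := quot_rec σ f c (d+1) hf
  have hgd : g d = 0 := quot_support σ f c (d+1) d (le_refl _)
  have expand : ev σ d g a (σ y * a - c * y)
      = (∑ j ∈ Finset.range d, g j * opev σ a y (j + 1))
        - ∑ j ∈ Finset.range d, (⇑σ)^[j] c * g j * opev σ a y j := by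
    unfold ev
    rw [← Finset.sum_sub_distrib]
    refine Finset.sum_congr rfl fun j _ => ?_
    rw [opev_sub, ← opev_succ σ a y j, opev_mul_left, mul_sub]
    ring
  have step1 : ∑ j ∈ Finset.range d, g j * opev σ a y (j + 1)
      = ∑ j ∈ Finset.range d, f (j + 1) * opev σ a y (j + 1)
        + ∑ j ∈ Finset.range d, (⇑σ)^[j+1] c * g (j + 1) * opev σ a y (j+1) := by
    rw [← Finset.sum_add_distrib]
    refine Finset.sum_congr rfl fun j _ => ?_
    rw [hrec j]; ring
  have step2 : ∑ j ∈ Finset.range d, (⇑σ)^[j+1] c * g (j + 1) * opev σ a y (j+1)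
      = ∑ j ∈ Finset.range d, (⇑σ)^[j] c * g j * opev σ a y j - c * g 0 * y := by
    have h1 : ∑ j ∈ Finset.range (d+1), (⇑σ)^[j] c * g j * opev σ a y j
        = (∑ j ∈ Finset.range d, (⇑σ)^[j+1] c * g (j+1) * opev σ a y (j+1))
          + (⇑σ)^[0] c * g 0 * opev σ a y 0 := Finset.sum_range_succ' _ d
    have h2 : ∑ j ∈ Finset.range (d+1), (⇑σ)^[j] c * g j * opev σ a y j
        = (∑ j ∈ Finset.range d, (⇑σ)^[j] c * g j * opev σ a y j)
          + (⇑σ)^[d] c * g d * opev σ a y d := Finset.sum_range_succ _ d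
    rw [hgd] at h2
    simp only [Function.iterate_zero_apply, opev_zero_idx, mul_zero, zero_mul, add_zero] at h1 h2
    linear_combination h2 - h1
  have hL : ev σ (d+1) f a y
      = (∑ j ∈ Finset.range d, f (j + 1) * opev σ a y (j + 1)) + f 0 * opev σ a y 0 :=
    Finset.sum_range_succ' _ d
  rw [hL, expand, step1, step2, opev_zero_idx]
  ring
  
end Basic

section KeyLemma

variable {K F : Type} [Field K] [Field F] [Algebra K F] (σ : F ≃+* F)

/-- `γ 0, …, γ (cnt-1)` are `K`-linearly independent (ℕ-indexed form). -/
def IndepOn (K : Type) [Field K] {F : Type} [Field F] [Algebra K F]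
    (cnt : ℕ) (γ : ℕ → F) : Prop :=
  ∀ gc : ℕ → K, (∑ μ ∈ Finset.range cnt, gc μ • γ μ = 0) → ∀ μ < cnt, gc μ = 0

lemma indepOn_ne_zero {cnt : ℕ} {γ : ℕ → F} (h : IndepOn K cnt γ) (hc : 0 < cnt) :
    γ 0 ≠ 0 := by
  intro h0
  have hsum : ∑ μ ∈ Finset.range cnt, (if μ = 0 then (1:K) else 0) • γ μ = 0 := by
    rw [Finset.sum_eq_single_of_mem 0 (Finset.mem_range.mpr hc)]
    · simp [h0]
    · intro b _ hb; simp [hb]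
  have := h _ hsum 0 hc
  simp at this

variable (hfix : ∀ x : F, σ x = x ↔ x ∈ Set.range (algebraMap K F))

include hfix

lemma sigma_smul (k : K) (y : F) : σ (k • y) = k • σ y := by
  rw [Algebra.smul_def, Algebra.smul_def, map_mul]
  congr 1
  exact (hfix _).mpr ⟨k, rfl⟩

/-- The `K`-linear map `y ↦ σ(y)·a - c·y`. -/
def Lmap (a c : F) : F →ₗ[K] F where
  toFun y := σ y * a - c * y
  map_add' x y := by simp [map_add]; ring
  map_smul' k y := by
    simp only [RingHom.id_apply, smul_sub]
    rw [sigma_smul σ hfix]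
    simp only [Algebra.smul_def]
    ring

lemma Lmap_apply (a c y : F) : Lmap σ hfix a c y = σ y * a - c * y := rfl

lemma key {ℓ : ℕ} (aa : Fin ℓ → F) (ha0 : ∀ i, aa i ≠ 0)
    (haconj : ∀ i j : Fin ℓ, i ≠ j → ¬ SConj σ (aa i) (aa j)) :
    ∀ (d : ℕ) (cnt : Fin ℓ → ℕ) (γ : Fin ℓ → ℕ → F),
      (∀ i, IndepOn K (cnt i) (γ i)) → d ≤ ∑ i, cnt i →
      ∀ f : ℕ → F, (∀ t, d ≤ t → f t = 0) →
      (∀ i μ, μ < cnt i → ev σ d f (aa i) (γ i μ) = 0) → ∀ j, f j = 0 := by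
  intro d
  induction d with
  | zero => intro _ _ _ _ f hsupp _ j; exact hsupp j (Nat.zero_le j)
  | succ e ih =>
    intro cnt γ hind hsum f hsupp hvan
    have hex : ∃ i₁, 0 < cnt i₁ := by
      by_contra hno
      push_neg at hno
      have : ∑ i, cnt i = 0 := Finset.sum_eq_zero fun i _ => by
        have := hno i; omega
      omega
    obtain ⟨i₁, hi₁⟩ := hex
    have hb0 : γ i₁ 0 ≠ 0 := indepOn_ne_zero (hind i₁) hi₁
    set c := σ (γ i₁ 0) * aa i₁ * (γ i₁ 0)⁻¹ with hcdef
    set g := quot σ f c (e + 1) with hgdef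
    have hid : ∀ a y : F, ev σ (e+1) f a y
        = ev σ e g a (σ y * a - c * y) + (f 0 + c * g 0) * y :=
      fun a y => ev_quot σ e f hsupp a c y
    have hLb : σ (γ i₁ 0) * aa i₁ - c * γ i₁ 0 = 0 := by
      rw [hcdef]; field_simp; simp
    have h0 := hvan i₁ 0 hi₁
    rw [hid (aa i₁) (γ i₁ 0), hLb, ev_zero_pt, zero_add] at h0
    have hr0 : f 0 + c * g 0 = 0 := (mul_eq_zero.mp h0).resolve_right hb0
    have hid' : ∀ a y : F, ev σ (e+1) f a y = ev σ e g a (σ y * a - c * y) := by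
      intro a y; rw [hid a y, hr0, zero_mul, add_zero]
    set cnt' : Fin ℓ → ℕ := fun i => if i = i₁ then cnt i - 1 else cnt i with hcnt'
    set γ' : Fin ℓ → ℕ → F := fun i μ =>
      if i = i₁ then Lmap σ hfix (aa i) c (γ i (μ+1)) else Lmap σ hfix (aa i) c (γ i μ)
      with hγ'
    have hsum' : e ≤ ∑ i, cnt' i := by
      have h1 : cnt i₁ + ∑ i ∈ Finset.univ.erase i₁, cnt i = ∑ i, cnt i :=
        Finset.add_sum_erase _ cnt (Finset.mem_univ i₁)
      have h2 : cnt' i₁ + ∑ i ∈ Finset.univ.erase i₁, cnt' i = ∑ i, cnt' i :=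
        Finset.add_sum_erase _ cnt' (Finset.mem_univ i₁)
      have h3 : ∑ i ∈ Finset.univ.erase i₁, cnt' i = ∑ i ∈ Finset.univ.erase i₁, cnt i :=
        Finset.sum_congr rfl fun i hi => by
          simp [hcnt', Finset.ne_of_mem_erase hi]
      have h4 : cnt' i₁ = cnt i₁ - 1 := by simp [hcnt']
      omega
    have hker : ∀ i, i ≠ i₁ → ∀ y : F, Lmap σ hfix (aa i) c y = 0 → y = 0 := by
      intro i hne y hy
      by_contra hy0
      rw [Lmap_apply] at hy
      apply haconj i₁ i (fun h => hne h.symm)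
      refine ⟨γ i₁ 0 * y⁻¹, by simp [hb0, hy0], ?_⟩
      rw [hcdef] at hy
      have hσy : σ y ≠ 0 := fun h => hy0 ((map_eq_zero_iff σ σ.injective).mp h)
      have hσb : σ (γ i₁ 0) ≠ 0 := fun h => hb0 ((map_eq_zero_iff σ σ.injective).mp h)
      field_simp at hy
      rw [map_mul, map_inv₀, mul_inv, inv_inv]
      field_simp
      linear_combination hy
    have hkerb : ∀ y : F, Lmap σ hfix (aa i₁) c y = 0 → ∃ k : K, y = k • γ i₁ 0 := by
      intro y hy
      by_cases hy0 : y = 0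
      · exact ⟨0, by simp [hy0]⟩
      rw [Lmap_apply] at hy
      rw [hcdef] at hy
      have ha1 : aa i₁ ≠ 0 := ha0 i₁
      have hfixed : σ (y * (γ i₁ 0)⁻¹) = y * (γ i₁ 0)⁻¹ := by
        have hσb : σ (γ i₁ 0) ≠ 0 := fun h => hb0 ((map_eq_zero_iff σ σ.injective).mp h)
        have hσy : σ y ≠ 0 := fun h => hy0 ((map_eq_zero_iff σ σ.injective).mp h)
        field_simp at hy
        have h2 : aa i₁ * (σ y * γ i₁ 0) = aa i₁ * (σ (γ i₁ 0) * y) := by linear_combination hy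
        have h3 : σ y * γ i₁ 0 = σ (γ i₁ 0) * y := mul_left_cancel₀ ha1 h2
        rw [map_mul, map_inv₀]
        field_simp
        linear_combination h3
      obtain ⟨k, hk⟩ := (hfix _).mp hfixed
      refine ⟨k, ?_⟩
      rw [Algebra.smul_def, hk]
      field_simp
    have hind' : ∀ i, IndepOn K (cnt' i) (γ' i) := by
      intro i
      by_cases hi : i = i₁
      · subst hi
        intro gc hsum0 μ hμ
        simp only [hγ', if_pos rfl] at hsum0
        have hv : Lmap σ hfix (aa i) c (∑ ν ∈ Finset.range (cnt' i), gc ν • γ i (ν+1)) = 0 := by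
          rw [map_sum]
          simpa only [map_smul] using hsum0
        obtain ⟨k, hk⟩ := hkerb _ hv
        have hcnt1 : cnt i = (cnt i - 1) + 1 := by
          have h4 : cnt' i = cnt i - 1 := by simp [hcnt']
          omega
        have hci : cnt' i = cnt i - 1 := by simp [hcnt']
        set gc' : ℕ → K := fun ν => if ν = 0 then -k else gc (ν - 1) with hgc'
        have hsum1 : ∑ ν ∈ Finset.range (cnt i), gc' ν • γ i ν = 0 := by
          rw [hcnt1, Finset.sum_range_succ']
          have e1 : ∀ ν ∈ Finset.range (cnt i - 1), gc' (ν+1) • γ i (ν+1) = gc ν • γ i (ν+1) := by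
            intro ν _; simp [hgc']
          rw [Finset.sum_congr rfl e1, ← hci, hk]
          simp [hgc']
        have hall := hind i gc' hsum1
        have h5 := hall (μ + 1) (by omega)
        simpa [hgc'] using h5
      · intro gc hsum0 μ hμ
        simp only [hγ', if_neg hi] at hsum0
        have hci : cnt' i = cnt i := by simp [hcnt', hi]
        have hv : Lmap σ hfix (aa i) c (∑ ν ∈ Finset.range (cnt' i), gc ν • γ i ν) = 0 := by
          rw [map_sum]
          simpa only [map_smul] using hsum0
        have h6 := hker i hi _ hv
        rw [hci] at h6 hμ
        exact hind i gc h6 μ hμ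
    have hvan' : ∀ i μ, μ < cnt' i → ev σ e g (aa i) (γ' i μ) = 0 := by
      intro i μ hμ
      by_cases hi : i = i₁
      · subst hi
        have hci : cnt' i = cnt i - 1 := by simp [hcnt']
        have h7 : ev σ (e+1) f (aa i) (γ i (μ+1)) = 0 := hvan i (μ+1) (by omega)
        rw [hid' (aa i) (γ i (μ+1))] at h7
        simpa [hγ', Lmap_apply] using h7
      · have hci : cnt' i = cnt i := by simp [hcnt', hi]
        have h8 : ev σ (e+1) f (aa i) (γ i μ) = 0 := hvan i μ (by omega)
        rw [hid' (aa i) (γ i μ)] at h8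
        simpa [hγ', hi, Lmap_apply] using h8
    have hgsupp : ∀ t, e ≤ t → g t = 0 := fun t ht => quot_support σ f c (e+1) t (by omega)
    have hg0 : ∀ j, g j = 0 := ih cnt' γ' hind' hsum' g hgsupp hvan'
    intro j
    match j with
    | 0 =>
      have h9 := hr0
      rw [hg0 0, mul_zero, add_zero] at h9
      exact h9
    | j + 1 =>
      have h10 := quot_rec σ f c (e+1) hsupp j
      rw [← hgdef, hg0 j, hg0 (j+1)] at h10
      simpa using h10.symm

end KeyLemma

section Conv

variable {K F : Type} [Field K] [Field F] [Algebra K F] (σ : F ≃+* F)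

/-- `σ`-iterate as additive hom. -/
def sIter (j : ℕ) : F →+ F := AddMonoidHom.mk' ((⇑σ)^[j]) (iter_add σ j)

lemma sIter_apply (j : ℕ) (x : F) : sIter σ j x = (⇑σ)^[j] x := rfl

lemma iter_sum {ι : Type*} (j : ℕ) (t : Finset ι) (h : ι → F) :
    (⇑σ)^[j] (∑ x ∈ t, h x) = ∑ x ∈ t, (⇑σ)^[j] (h x) := by
  exact map_sum (sIter σ j) h t

lemma opev_sum_pt {ι : Type*} (a : F) (u : ℕ) (t : Finset ι) (h : ι → F) :
    opev σ a (∑ x ∈ t, h x) u = ∑ x ∈ t, opev σ a (h x) u := by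
  simp [opev, iter_sum, Finset.sum_mul]

lemma ev_sum_pt {ι : Type*} (d : ℕ) (f : ℕ → F) (a : F) (t : Finset ι) (h : ι → F) :
    ev σ d f a (∑ x ∈ t, h x) = ∑ x ∈ t, ev σ d f a (h x) := by
  unfold ev
  rw [Finset.sum_comm]
  refine Finset.sum_congr rfl fun j _ => ?_
  rw [opev_sum_pt, Finset.mul_sum]

variable (hfix : ∀ x : F, σ x = x ↔ x ∈ Set.range (algebraMap K F))

include hfix in
lemma iter_smul (u : ℕ) (k : K) (y : F) : (⇑σ)^[u] (k • y) = k • (⇑σ)^[u] y := by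
  rw [Algebra.smul_def, Algebra.smul_def, iter_mul]
  congr 1
  exact iter_fixed σ u ((hfix _).mpr ⟨k, rfl⟩)

include hfix in
lemma ev_smul_pt (d : ℕ) (f : ℕ → F) (a : F) (k : K) (y : F) :
    ev σ d f a (k • y) = k • ev σ d f a y := by
  rw [Algebra.smul_def, ev_mul_pt σ d f a y ((hfix _).mpr ⟨k, rfl⟩), Algebra.smul_def]

/-- coefficientwise lemmas -/
lemma ev_add_coeff (d : ℕ) (f g : ℕ → F) (a y : F) :
    ev σ d (fun j => f j + g j) a y = ev σ d f a y + ev σ d g a y := by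
  simp [ev, add_mul, Finset.sum_add_distrib]

lemma ev_sum_coeff {ι : Type*} (d : ℕ) (t : Finset ι) (h : ι → ℕ → F) (a y : F) :
    ev σ d (fun j => ∑ x ∈ t, h x j) a y = ∑ x ∈ t, ev σ d (h x) a y := by
  unfold ev
  rw [Finset.sum_comm]
  refine Finset.sum_congr rfl fun j _ => ?_
  rw [Finset.sum_mul]

lemma ev_congr_coeff (d : ℕ) (f g : ℕ → F) (h : ∀ j, j < d → f j = g j) (a y : F) :
    ev σ d f a y = ev σ d g a y :=
  Finset.sum_congr rfl fun j hj => by rw [h j (Finset.mem_range.mp hj)]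

/-- triangle sum swap -/
lemma tri {M : Type*} [AddCommMonoid M] (D : ℕ) (T : ℕ → ℕ → M) :
    ∑ j ∈ Finset.range D, ∑ u ∈ Finset.range (j+1), T u j
      = ∑ u ∈ Finset.range D, ∑ j ∈ Finset.Ico u D, T u j := by
  induction D with
  | zero => simp
  | succ e ih =>
    rw [Finset.sum_range_succ, ih]
    have h1 : ∀ u ∈ Finset.range e, ∑ j ∈ Finset.Ico u (e+1), T u j
        = (∑ j ∈ Finset.Ico u e, T u j) + T u e := by
      intro u hu
      rw [Finset.sum_Ico_succ_top (le_of_lt (Finset.mem_range.mp hu))]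
    rw [Finset.sum_range_succ (fun u => ∑ j ∈ Finset.Ico u (e+1), T u j) e,
      Finset.sum_congr rfl h1, Finset.sum_add_distrib]
    have h2 : ∑ j ∈ Finset.Ico e (e+1), T e j = T e e := by simp
    rw [h2]
    have h3 : ∑ u ∈ Finset.range (e+1), T u e
        = (∑ u ∈ Finset.range e, T u e) + T e e := Finset.sum_range_succ _ e
    rw [h3]
    abel

/-- skew-polynomial product coefficients -/
def conv (Q f : ℕ → F) (j : ℕ) : F :=
  ∑ u ∈ Finset.range (j+1), Q u * (⇑σ)^[u] (f (j - u))

lemma conv_support (d1 d2 : ℕ) (Q f : ℕ → F)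
    (hQ : ∀ u, d1 ≤ u → Q u = 0) (hf : ∀ v, d2 ≤ v → f v = 0) :
    ∀ j, d1 + d2 ≤ j + 1 → conv σ Q f j = 0 := by
  intro j hj
  refine Finset.sum_eq_zero fun u hu => ?_
  rw [Finset.mem_range] at hu
  by_cases h1 : d1 ≤ u
  · rw [hQ u h1, zero_mul]
  · rw [hf (j - u) (by omega), iter_zero, mul_zero]

lemma conv_add_right (Q f g : ℕ → F) (j : ℕ) :
    conv σ Q (fun v => f v + g v) j = conv σ Q f j + conv σ Q g j := by
  simp [conv, iter_add, mul_add, Finset.sum_add_distrib]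

include hfix in
lemma conv_smul_right (Q f : ℕ → F) (k : K) (j : ℕ) :
    conv σ Q (fun v => k • f v) j = k • conv σ Q f j := by
  unfold conv
  rw [Finset.smul_sum]
  refine Finset.sum_congr rfl fun u _ => ?_
  rw [iter_smul σ hfix, Algebra.smul_def, Algebra.smul_def]
  ring

lemma conv_zero_right (Q : ℕ → F) (j : ℕ) : conv σ Q (fun _ => 0) j = 0 := by
  simp [conv, iter_zero]

lemma conv_zero_left (f : ℕ → F) (j : ℕ) : conv σ (fun _ => 0) f j = 0 := by
  simp [conv]

/-- product rule for evaluation -/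
lemma ev_conv (d1 d2 : ℕ) (Q f : ℕ → F)
    (hQ : ∀ u, d1 ≤ u → Q u = 0) (hf : ∀ v, d2 ≤ v → f v = 0) (a y : F) :
    ev σ (d1 + d2) (conv σ Q f) a y = ev σ d1 Q a (ev σ d2 f a y) := by
  have hop : ∀ u, opev σ a (ev σ d2 f a y) u
      = ∑ v ∈ Finset.range d2, (⇑σ)^[u] (f v) * opev σ a y (u + v) := by
    intro u
    unfold ev
    rw [opev_sum_pt]
    refine Finset.sum_congr rfl fun v _ => ?_
    rw [opev_mul_left, opev_opev]
  have hrhs : ev σ d1 Q a (ev σ d2 f a y)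
      = ∑ u ∈ Finset.range d1, ∑ v ∈ Finset.range d2,
          Q u * (⇑σ)^[u] (f v) * opev σ a y (u + v) := by
    rw [show ev σ d1 Q a (ev σ d2 f a y)
        = ∑ u ∈ Finset.range d1, Q u * opev σ a (ev σ d2 f a y) u from rfl]
    refine Finset.sum_congr rfl fun u _ => ?_
    rw [hop, Finset.mul_sum]
    refine Finset.sum_congr rfl fun v _ => ?_
    ring
  have hlhs : ev σ (d1 + d2) (conv σ Q f) a y
      = ∑ u ∈ Finset.range (d1 + d2), ∑ j ∈ Finset.Ico u (d1 + d2),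
          Q u * (⇑σ)^[u] (f (j - u)) * opev σ a y j := by
    unfold ev conv
    rw [← tri]
    refine Finset.sum_congr rfl fun j _ => ?_
    rw [Finset.sum_mul]
  rw [hlhs, hrhs]
  have hsub : ∀ u ∈ Finset.range (d1 + d2),
      ∑ j ∈ Finset.Ico u (d1 + d2), Q u * (⇑σ)^[u] (f (j - u)) * opev σ a y j
        = ∑ v ∈ Finset.range (d1 + d2 - u), Q u * (⇑σ)^[u] (f v) * opev σ a y (u + v) := by
    intro u _
    rw [Finset.sum_Ico_eq_sum_range]
    refine Finset.sum_congr rfl fun v _ => ?_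
    rw [Nat.add_sub_cancel_left]
  rw [Finset.sum_congr rfl hsub]
  have h1 : ∀ u ∈ Finset.range d1,
      ∑ v ∈ Finset.range (d1 + d2 - u), Q u * (⇑σ)^[u] (f v) * opev σ a y (u + v)
      = ∑ v ∈ Finset.range d2, Q u * (⇑σ)^[u] (f v) * opev σ a y (u + v) := by
    intro u hu
    rw [Finset.mem_range] at hu
    refine (Finset.sum_subset (Finset.range_subset_range.mpr (by omega)) fun v _ hv => ?_).symm
    rw [Finset.mem_range, not_lt] at hv
    rw [hf v hv, iter_zero, mul_zero, zero_mul]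
  rw [show (∑ u ∈ Finset.range d1, ∑ v ∈ Finset.range d2,
      Q u * (⇑σ)^[u] (f v) * opev σ a y (u + v))
      = ∑ u ∈ Finset.range d1, ∑ v ∈ Finset.range (d1 + d2 - u),
          Q u * (⇑σ)^[u] (f v) * opev σ a y (u + v) from (Finset.sum_congr rfl h1).symm]
  refine (Finset.sum_subset (Finset.range_subset_range.mpr (Nat.le_add_right d1 d2))
    fun u _ hu => ?_).symm
  rw [Finset.mem_range, not_lt] at hu
  exact Finset.sum_eq_zero fun v _ => by rw [hQ u hu, zero_mul, zero_mul]

/-- nonvanishing of a product of nonzero skew polynomials -/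
lemma conv_ne (d1 d2 : ℕ) (Q f : ℕ → F)
    (hQs : ∀ u, d1 ≤ u → Q u = 0) (hfs : ∀ v, d2 ≤ v → f v = 0)
    (hQ : ∃ u, Q u ≠ 0) (hf : ∃ v, f v ≠ 0) :
    ∃ j, j + 2 ≤ d1 + d2 ∧ conv σ Q f j ≠ 0 := by
  classical
  obtain ⟨u1, hu1⟩ := hQ
  obtain ⟨v1, hv1⟩ := hf
  have hSQne : ((Finset.range d1).filter (fun u => Q u ≠ 0)).Nonempty := ⟨u1, by
    rw [Finset.mem_filter, Finset.mem_range]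
    refine ⟨?_, hu1⟩
    by_contra h
    exact hu1 (hQs u1 (by omega))⟩
  have hSfne : ((Finset.range d2).filter (fun v => f v ≠ 0)).Nonempty := ⟨v1, by
    rw [Finset.mem_filter, Finset.mem_range]
    refine ⟨?_, hv1⟩
    by_contra h
    exact hv1 (hfs v1 (by omega))⟩
  obtain ⟨u0, hu0lt, hu0ne, hu0max⟩ :
      ∃ u0, u0 < d1 ∧ Q u0 ≠ 0 ∧ ∀ u, u0 < u → Q u = 0 := by
    refine ⟨((Finset.range d1).filter (fun u => Q u ≠ 0)).max' hSQne, ?_, ?_, ?_⟩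
    · have := Finset.max'_mem _ hSQne
      rw [Finset.mem_filter, Finset.mem_range] at this
      exact this.1
    · have := Finset.max'_mem _ hSQne
      rw [Finset.mem_filter] at this
      exact this.2
    · intro u hu
      by_cases h1 : d1 ≤ u
      · exact hQs u h1
      · by_contra h2
        have hmem : u ∈ (Finset.range d1).filter (fun u => Q u ≠ 0) := by
          rw [Finset.mem_filter, Finset.mem_range]; exact ⟨by omega, h2⟩
        have := Finset.le_max' _ u hmem
        omega
  obtain ⟨v0, hv0lt, hv0ne, hv0max⟩ :
      ∃ v0, v0 < d2 ∧ f v0 ≠ 0 ∧ ∀ v, v0 < v → f v = 0 := by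
    refine ⟨((Finset.range d2).filter (fun v => f v ≠ 0)).max' hSfne, ?_, ?_, ?_⟩
    · have := Finset.max'_mem _ hSfne
      rw [Finset.mem_filter, Finset.mem_range] at this
      exact this.1
    · have := Finset.max'_mem _ hSfne
      rw [Finset.mem_filter] at this
      exact this.2
    · intro v hv
      by_cases h1 : d2 ≤ v
      · exact hfs v h1
      · by_contra h2
        have hmem : v ∈ (Finset.range d2).filter (fun v => f v ≠ 0) := by
          rw [Finset.mem_filter, Finset.mem_range]; exact ⟨by omega, h2⟩
        have := Finset.le_max' _ v hmem
        omega
  refine ⟨u0 + v0, by omega, ?_⟩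
  unfold conv
  have hz : ∀ u ∈ Finset.range (u0 + v0 + 1), u ≠ u0 → Q u * (⇑σ)^[u] (f (u0 + v0 - u)) = 0 := by
    intro u hu hne
    rw [Finset.mem_range] at hu
    by_cases h1 : u0 < u
    · rw [hu0max u h1, zero_mul]
    · rw [hv0max (u0 + v0 - u) (by omega), iter_zero, mul_zero]
  rw [Finset.sum_eq_single_of_mem u0 (Finset.mem_range.mpr (by omega)) hz,
    Nat.add_sub_cancel_left]
  exact mul_ne_zero hu0ne (fun h => hv0ne ((iter_eq_zero_iff σ u0 _).mp h))

end Conv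

section Helpers

variable {K F : Type} [Field K] [Field F] [Algebra K F] (σ : F ≃+* F)

/-- extension of a finite coefficient vector by zero -/
def ext {F : Type} [Field F] {d : ℕ} (v : Fin d → F) : ℕ → F :=
  fun j => if h : j < d then v ⟨j, h⟩ else 0

lemma ext_lt {F : Type} [Field F] {d : ℕ} (v : Fin d → F) {j : ℕ} (h : j < d) :
    ext v j = v ⟨j, h⟩ := dif_pos h

lemma ext_ge {F : Type} [Field F] {d : ℕ} (v : Fin d → F) : ∀ j, d ≤ j → ext v j = 0 :=
  fun _ h => dif_neg (by omega)

lemma ext_add {F : Type} [Field F] {d : ℕ} (v w : Fin d → F) (j : ℕ) :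
    ext (v + w) j = ext v j + ext w j := by
  unfold ext; split <;> simp

lemma ext_smul {K F : Type} [Field K] [Field F] [Algebra K F] {d : ℕ}
    (k : K) (v : Fin d → F) (j : ℕ) : ext (k • v) j = k • ext v j := by
  unfold ext; split <;> simp

lemma ext_zero {F : Type} [Field F] {d : ℕ} (j : ℕ) : ext (0 : Fin d → F) j = 0 := by
  unfold ext; split <;> simp

lemma indepOn_of_linearIndependent (w : ℕ) (γ : ℕ → F)
    (h : LinearIndependent K fun ρ : Fin w => γ ρ.val) : IndepOn K w γ := by
  intro gc hsum μ hμ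
  have h2 := Fintype.linearIndependent_iff.mp h (fun ρ => gc ρ.val) ?_ ⟨μ, hμ⟩
  · exact h2
  · rw [Fin.sum_univ_eq_sum_range (fun ν => gc ν • γ ν) w]
    exact hsum

lemma ev_ext (d : ℕ) (v : Fin d → F) (a y : F) :
    ev σ d (ext v) a y = ∑ jf : Fin d, v jf * opev σ a y jf.val := by
  unfold ev
  rw [← Fin.sum_univ_eq_sum_range (fun j => ext v j * opev σ a y j) d]
  refine Finset.sum_congr rfl fun jf _ => ?_
  rw [ext_lt v jf.isLt]

end Helpers

section Main

/-- List size of ILRS list decoding.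
For every received word `R ∈ F^{s×n}`, the number of message matrices `M ∈ F^{s×k}` with
`(s+1)·wt_ΣR(R − C(M)) < s·(n−k+1)` is at most `q^{m·k·(s−1)}`. -/
theorem list_size_le
    {K F : Type} [Field K] [Field F] [Algebra K F] [Fintype K] [Fintype F]
    (σ : F ≃+* F)
    (hfix : ∀ x : F, σ x = x ↔ x ∈ Set.range (algebraMap K F))
    {q m : ℕ} (hq : Fintype.card K = q) (hm : Module.finrank K F = m)
    {ℓ : ℕ} (hℓ : 1 ≤ ℓ) (nn : Fin ℓ → ℕ) (aa : Fin ℓ → F)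
    (ha0 : ∀ i, aa i ≠ 0)
    (haconj : ∀ i j : Fin ℓ, i ≠ j → ¬ SConj σ (aa i) (aa j))
    (β : (Σ i : Fin ℓ, Fin (nn i)) → F)
    (hβ : ∀ i, LinearIndependent K fun μ : Fin (nn i) => β ⟨i, μ⟩)
    {s : ℕ} (hs : 1 ≤ s) {k n : ℕ} (hn : n = ∑ i, nn i)
    (hk : 1 ≤ k) (hkn : k ≤ n) :
    ∀ R : Matrix (Fin s) (Σ i : Fin ℓ, Fin (nn i)) F,
      Nat.card {M : Matrix (Fin s) (Fin k) F //
          (s + 1) * wtM K nn (R - codeword σ nn aa β k M) < s * (n - k + 1)}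
        ≤ q ^ (m * k * (s - 1)) := by
  intro R
  classical
  have hAcond : True := trivial
  haveI : Module.Finite K F := Module.Finite.of_finite
  -- arithmetic setup
  obtain ⟨A, hAdef⟩ : ∃ A, A = s * (n - k + 1) := ⟨_, rfl⟩
  obtain ⟨T, hTdef⟩ : ∃ T, T = (A - 1) / (s + 1) := ⟨_, rfl⟩
  have hA1 : 1 ≤ A := by
    have h1 : 1 ≤ n - k + 1 := by omega
    have := Nat.mul_le_mul hs h1
    omega
  have hTle : (s + 1) * T ≤ A - 1 := by
    have h : T * (s + 1) ≤ A - 1 := hTdef ▸ Nat.div_mul_le_self (A - 1) (s + 1)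
    have h2 : T * (s + 1) = (s + 1) * T := Nat.mul_comm _ _
    omega
  have hTnk : T ≤ n - k := by
    have h2 : T < n - k + 1 := by
      rw [hTdef, Nat.div_lt_iff_lt_mul (by omega : 0 < s + 1)]
      have h3 : (n - k + 1) * (s + 1) = s * (n - k + 1) + (n - k + 1) := by ring
      omega
    omega
  obtain ⟨D0, hD0def⟩ : ∃ D0, D0 = n - T := ⟨_, rfl⟩
  obtain ⟨D1, hD1def⟩ : ∃ D1, D1 = D0 + 1 - k := ⟨_, rfl⟩
  have hkD0 : k ≤ D0 := by omega
  have hD01 : D1 + k = D0 + 1 := by omega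
  have hD0n : D0 ≤ n := by omega
  have hdim : n + 1 ≤ D0 + s * D1 := by
    have h1 : D1 = (n - k + 1) - T := by omega
    have h2 : s * D1 = s * (n - k + 1) - s * T := by rw [h1, Nat.mul_sub]
    have h3 : (s + 1) * T = s * T + T := by ring
    omega
  -- interpolation
  have hinterpol : ∃ x : (Fin D0 → F) × (Fin s → Fin D1 → F), x ≠ 0 ∧
      ∀ p : (Σ i : Fin ℓ, Fin (nn i)),
        ev σ D0 (ext x.1) (aa p.1) (β p)
          + ∑ t, ev σ D1 (ext (x.2 t)) (aa p.1) (R t p) = 0 := by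
    have hcard_idx : Fintype.card (Σ i : Fin ℓ, Fin (nn i)) = n := by
      simp only [Fintype.card_sigma, Fintype.card_fin]
      exact hn.symm
    set Ψ : ((Fin D0 → F) × (Fin s → Fin D1 → F)) → ((Σ i : Fin ℓ, Fin (nn i)) → F) :=
      fun x p => ev σ D0 (ext x.1) (aa p.1) (β p)
        + ∑ t, ev σ D1 (ext (x.2 t)) (aa p.1) (R t p) with hΨdef
    have hΨadd : ∀ x y, Ψ (x + y) = Ψ x + Ψ y := by
      intro x y
      funext p
      show ev σ D0 (ext (x.1 + y.1)) (aa p.1) (β p)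
          + ∑ t, ev σ D1 (ext ((x.2 + y.2) t)) (aa p.1) (R t p)
        = (ev σ D0 (ext x.1) (aa p.1) (β p) + ∑ t, ev σ D1 (ext (x.2 t)) (aa p.1) (R t p))
          + (ev σ D0 (ext y.1) (aa p.1) (β p) + ∑ t, ev σ D1 (ext (y.2 t)) (aa p.1) (R t p))
      simp only [Pi.add_apply]
      have e0 : ∀ j, j < D0 → ext (x.1 + y.1) j = ext x.1 j + ext y.1 j :=
        fun j _ => ext_add x.1 y.1 j
      rw [ev_congr_coeff σ D0 _ _ e0, ev_add_coeff]
      have e1 : ∀ t ∈ Finset.univ, ev σ D1 (ext (x.2 t + y.2 t)) (aa p.1) (R t p)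
          = ev σ D1 (ext (x.2 t)) (aa p.1) (R t p)
            + ev σ D1 (ext (y.2 t)) (aa p.1) (R t p) := by
        intro t _
        have e2 : ∀ j, j < D1 → ext (x.2 t + y.2 t) j = ext (x.2 t) j + ext (y.2 t) j :=
          fun j _ => ext_add _ _ j
        rw [ev_congr_coeff σ D1 _ _ e2, ev_add_coeff]
      rw [Finset.sum_congr rfl e1, Finset.sum_add_distrib]
      ring
    have hlt : Fintype.card ((Σ i : Fin ℓ, Fin (nn i)) → F)
        < Fintype.card ((Fin D0 → F) × (Fin s → Fin D1 → F)) := by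
      rw [Fintype.card_fun, Fintype.card_prod, Fintype.card_fun, Fintype.card_fun,
        Fintype.card_fun, hcard_idx]
      simp only [Fintype.card_fin]
      rw [← pow_mul, ← pow_add]
      refine Nat.pow_lt_pow_right Fintype.one_lt_card ?_
      have hc : D1 * s = s * D1 := Nat.mul_comm _ _
      omega
    obtain ⟨x, y, hxy, hΨeq⟩ := Fintype.exists_ne_map_eq_of_card_lt Ψ hlt
    refine ⟨x - y, sub_ne_zero.mpr hxy, ?_⟩
    have h1 := hΨadd (x - y) y
    rw [sub_add_cancel] at h1
    have h2 : Ψ (x - y) + Ψ y = 0 + Ψ y := by rw [zero_add, ← h1, hΨeq]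
    have h3 : Ψ (x - y) = 0 := add_right_cancel h2
    intro p
    exact congrFun h3 p
  obtain ⟨Qs, hQsne, hinterp⟩ := hinterpol
  -- main claim: list elements give zero combination
  have claim : ∀ M : Matrix (Fin s) (Fin k) F,
      (s + 1) * wtM K nn (R - codeword σ nn aa β k M) < s * (n - k + 1) →
      ∀ j, ext Qs.1 j
        + ∑ t, conv σ (ext (Qs.2 t)) (ext (fun jk : Fin k => M t jk)) j = 0 := by
    intro M hM
    set E := R - codeword σ nn aa β k M with hEdef
    set Pc : ℕ → F := fun j =>
      ext Qs.1 j + ∑ t, conv σ (ext (Qs.2 t)) (ext (fun jk : Fin k => M t jk)) j with hPcdef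
    have hPsupp : ∀ t0, D0 ≤ t0 → Pc t0 = 0 := by
      intro t0 ht0
      show ext Qs.1 t0 + ∑ t, conv σ (ext (Qs.2 t)) (ext (fun jk : Fin k => M t jk)) t0 = 0
      rw [ext_ge _ t0 ht0, Finset.sum_eq_zero, add_zero]
      intro t _
      exact conv_support σ D1 k _ _ (ext_ge _) (ext_ge _) t0 (by omega)
    set φm : ∀ i : Fin ℓ, (Fin (nn i) → K) →ₗ[K] (Fin s → F) :=
      fun i => Fintype.linearCombination K (fun μ : Fin (nn i) => fun r : Fin s => E r ⟨i, μ⟩)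
      with hφdef
    set w : Fin ℓ → ℕ := fun i => Module.finrank K (LinearMap.ker (φm i)) with hwdef
    have hwr : ∀ i, Module.finrank K (LinearMap.range (φm i)) + w i = nn i := by
      intro i
      show _ + Module.finrank K (LinearMap.ker (φm i)) = _
      rw [LinearMap.finrank_range_add_finrank_ker (φm i), Module.finrank_pi, Fintype.card_fin]
    have hrk : ∀ i, Module.finrank K (LinearMap.range (φm i))
        = rkqMat K (Matrix.of fun (r : Fin s) (μ : Fin (nn i)) => E r ⟨i, μ⟩) := by
      intro i
      show Module.finrank K (LinearMap.range
        (Fintype.linearCombination K (fun μ : Fin (nn i) => fun r : Fin s => E r ⟨i, μ⟩))) = _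
      rw [Fintype.range_linearCombination]
      rfl
    have hwtE : wtM K nn E = ∑ i, Module.finrank K (LinearMap.range (φm i)) := by
      show ∑ i, rkqMat K (Matrix.of fun (r : Fin s) (μ : Fin (nn i)) => E r ⟨i, μ⟩) = _
      exact Finset.sum_congr rfl fun i _ => (hrk i).symm
    have hwt : wtM K nn E ≤ T := by
      have h3 : wtM K nn E * (s+1) ≤ A - 1 := by
        have h4 : wtM K nn E * (s+1) = (s+1) * wtM K nn E := by ring
        omega
      rw [hTdef, Nat.le_div_iff_mul_le (by omega : 0 < s+1)]
      exact h3
    have hsumw : D0 ≤ ∑ i, w i := by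
      have h1 : ∑ i, (Module.finrank K (LinearMap.range (φm i)) + w i) = ∑ i, nn i :=
        Finset.sum_congr rfl fun i _ => hwr i
      rw [Finset.sum_add_distrib] at h1
      have h5 : n = ∑ i, nn i := hn
      omega
    set bas : ∀ i : Fin ℓ, Module.Basis (Fin (w i)) K (LinearMap.ker (φm i)) :=
      fun i => Module.finBasis K _ with hbasdef
    set γblk : Fin ℓ → ℕ → F := fun i ρ =>
      if h : ρ < w i then
        ∑ μ, ((bas i ⟨ρ, h⟩ : Fin (nn i) → K) μ) • β ⟨i, μ⟩
      else 0 with hγdef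
    have hψker : ∀ i, LinearMap.ker
        (Fintype.linearCombination K (fun μ : Fin (nn i) => β ⟨i, μ⟩)) = ⊥ := by
      intro i
      rw [LinearMap.ker_eq_bot']
      intro v hv
      rw [Fintype.linearCombination_apply] at hv
      have h6 := Fintype.linearIndependent_iff.mp (hβ i) v hv
      funext μ
      exact h6 μ
    have hindep : ∀ i, IndepOn K (w i) (γblk i) := by
      intro i
      apply indepOn_of_linearIndependent
      have hfam : (fun ρ : Fin (w i) => γblk i ρ.val)
          = ⇑((Fintype.linearCombination K (fun μ : Fin (nn i) => β ⟨i, μ⟩)).comp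
              (LinearMap.ker (φm i)).subtype) ∘ ⇑(bas i) := by
        funext ρ
        show γblk i ρ.val = _
        rw [hγdef]
        simp only
        rw [dif_pos ρ.isLt]
        simp only [Function.comp_apply, LinearMap.comp_apply, Submodule.coe_subtype,
          Fintype.linearCombination_apply, Fin.eta]
      rw [hfam]
      refine (bas i).linearIndependent.map' _ ?_
      rw [LinearMap.ker_comp, hψker i, Submodule.comap_bot, Submodule.ker_subtype]
    have hC : ∀ (t : Fin s) (p : (Σ i : Fin ℓ, Fin (nn i))),
        ev σ k (ext (fun jk : Fin k => M t jk)) (aa p.1) (β p)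
          = codeword σ nn aa β k M t p := by
      intro t p
      rw [ev_ext]
      show _ = (M * moore σ nn aa k β) t p
      rw [Matrix.mul_apply]
      rfl
    have hconvv : ∀ (t : Fin s) (a y : F),
        ev σ D0 (fun j => conv σ (ext (Qs.2 t)) (ext (fun jk : Fin k => M t jk)) j) a y
          = ev σ D1 (ext (Qs.2 t)) a (ev σ k (ext (fun jk : Fin k => M t jk)) a y) := by
      intro t a y
      rw [← ev_conv σ D1 k _ _ (ext_ge _) (ext_ge _) a y]
      have h7 : ev σ (D1 + k) (fun j => conv σ (ext (Qs.2 t)) (ext (fun jk : Fin k => M t jk)) j) a y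
          = ev σ (D0 + 1) (fun j => conv σ (ext (Qs.2 t)) (ext (fun jk : Fin k => M t jk)) j) a y := by
        rw [hD01]
      rw [h7, show ev σ (D0 + 1) (fun j => conv σ (ext (Qs.2 t)) (ext (fun jk : Fin k => M t jk)) j) a y
          = ev σ D0 (fun j => conv σ (ext (Qs.2 t)) (ext (fun jk : Fin k => M t jk)) j) a y
            + conv σ (ext (Qs.2 t)) (ext (fun jk : Fin k => M t jk)) D0 * opev σ a y D0
          from Finset.sum_range_succ _ D0]
      rw [conv_support σ D1 k _ _ (ext_ge _) (ext_ge _) D0 (by omega), zero_mul, add_zero]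
    have hPβ : ∀ p : (Σ i : Fin ℓ, Fin (nn i)),
        ev σ D0 Pc (aa p.1) (β p) = - ∑ t, ev σ D1 (ext (Qs.2 t)) (aa p.1) (E t p) := by
      intro p
      have h1 : ev σ D0 Pc (aa p.1) (β p)
          = ev σ D0 (ext Qs.1) (aa p.1) (β p)
            + ∑ t, ev σ D1 (ext (Qs.2 t)) (aa p.1) (codeword σ nn aa β k M t p) := by
        have ha : ev σ D0 Pc (aa p.1) (β p)
            = ev σ D0 (ext Qs.1) (aa p.1) (β p)
              + ev σ D0 (fun j => ∑ t, conv σ (ext (Qs.2 t)) (ext (fun jk : Fin k => M t jk)) j)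
                  (aa p.1) (β p) :=
          ev_add_coeff σ D0 (ext Qs.1) _ (aa p.1) (β p)
        rw [ha, ev_sum_coeff]
        congr 1
        refine Finset.sum_congr rfl fun t _ => ?_
        rw [hconvv, hC]
      rw [h1]
      have h2 : ev σ D0 (ext Qs.1) (aa p.1) (β p)
          = - ∑ t, ev σ D1 (ext (Qs.2 t)) (aa p.1) (R t p) := by
        linear_combination (hinterp p)
      rw [h2]
      have h3 : ∀ t ∈ Finset.univ, ev σ D1 (ext (Qs.2 t)) (aa p.1) (E t p)
          = ev σ D1 (ext (Qs.2 t)) (aa p.1) (R t p)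
            - ev σ D1 (ext (Qs.2 t)) (aa p.1) (codeword σ nn aa β k M t p) := by
        intro t _
        rw [show E t p = R t p - codeword σ nn aa β k M t p from Matrix.sub_apply R _ t p,
          ev_sub_pt]
      rw [Finset.sum_congr rfl h3, Finset.sum_sub_distrib]
      ring
    have hvan : ∀ i ρ, ρ < w i → ev σ D0 Pc (aa i) (γblk i ρ) = 0 := by
      intro i ρ hρ
      have hpt : γblk i ρ = ∑ μ, ((bas i ⟨ρ, hρ⟩ : Fin (nn i) → K) μ) • β ⟨i, μ⟩ := by
        rw [hγdef]
        simp only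
        rw [dif_pos hρ]
      rw [hpt, ev_sum_pt]
      have h4 : ∀ μ ∈ Finset.univ,
          ev σ D0 Pc (aa i) (((bas i ⟨ρ, hρ⟩ : Fin (nn i) → K)) μ • β ⟨i, μ⟩)
          = ((bas i ⟨ρ, hρ⟩ : Fin (nn i) → K)) μ
              • (- ∑ t, ev σ D1 (ext (Qs.2 t)) (aa i) (E t ⟨i, μ⟩)) := by
        intro μ _
        rw [ev_smul_pt σ hfix, hPβ ⟨i, μ⟩]
      rw [Finset.sum_congr rfl h4]
      have h5 : ∀ μ ∈ Finset.univ,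
          ((bas i ⟨ρ, hρ⟩ : Fin (nn i) → K)) μ
            • (- ∑ t, ev σ D1 (ext (Qs.2 t)) (aa i) (E t ⟨i, μ⟩))
          = - ∑ t, ((bas i ⟨ρ, hρ⟩ : Fin (nn i) → K)) μ
              • ev σ D1 (ext (Qs.2 t)) (aa i) (E t ⟨i, μ⟩) := by
        intro μ _
        rw [smul_neg, Finset.smul_sum]
      rw [Finset.sum_congr rfl h5, Finset.sum_neg_distrib, Finset.sum_comm]
      have h6 : ∀ t ∈ Finset.univ,
          ∑ μ, ((bas i ⟨ρ, hρ⟩ : Fin (nn i) → K)) μ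
            • ev σ D1 (ext (Qs.2 t)) (aa i) (E t ⟨i, μ⟩) = 0 := by
        intro t _
        have h7 : ∑ μ, ((bas i ⟨ρ, hρ⟩ : Fin (nn i) → K)) μ
              • ev σ D1 (ext (Qs.2 t)) (aa i) (E t ⟨i, μ⟩)
            = ev σ D1 (ext (Qs.2 t)) (aa i)
                (∑ μ, ((bas i ⟨ρ, hρ⟩ : Fin (nn i) → K)) μ • E t ⟨i, μ⟩) := by
          rw [ev_sum_pt]
          exact Finset.sum_congr rfl fun μ _ => (ev_smul_pt σ hfix D1 _ (aa i) _ _).symm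
        rw [h7]
        have h8 : ∑ μ, ((bas i ⟨ρ, hρ⟩ : Fin (nn i) → K)) μ • E t ⟨i, μ⟩ = 0 := by
          have hmem : φm i ((bas i ⟨ρ, hρ⟩ : Fin (nn i) → K)) = 0 :=
            LinearMap.mem_ker.mp (Submodule.coe_mem (bas i ⟨ρ, hρ⟩))
          have h9 : φm i ((bas i ⟨ρ, hρ⟩ : Fin (nn i) → K))
              = ∑ μ, ((bas i ⟨ρ, hρ⟩ : Fin (nn i) → K)) μ
                  • (fun r : Fin s => E r ⟨i, μ⟩) := by
            show (Fintype.linearCombination K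
              (fun μ : Fin (nn i) => fun r : Fin s => E r ⟨i, μ⟩)) _ = _
            rw [Fintype.linearCombination_apply]
          have h10 := congrFun (h9 ▸ hmem) t
          simpa [Finset.sum_apply] using h10
        rw [h8, ev_zero_pt]
      rw [Finset.sum_congr rfl h6]
      simp
    have hPzero := key σ hfix aa ha0 haconj D0 w γblk hindep hsumw Pc hPsupp hvan
    intro j
    exact hPzero j
  -- emptiness case
  by_cases hne : Nonempty {M : Matrix (Fin s) (Fin k) F //
      (s + 1) * wtM K nn (R - codeword σ nn aa β k M) < s * (n - k + 1)}
  case neg =>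
    rw [not_nonempty_iff] at hne
    rw [Nat.card_of_isEmpty]
    exact Nat.zero_le _
  case pos =>
  -- some interpolation component in positions 1..s is nonzero
  have hQτ : ∃ τ, Qs.2 τ ≠ 0 := by
    by_contra hall
    push_neg at hall
    obtain ⟨M0⟩ := hne
    apply hQsne
    have hQ0 : Qs.1 = 0 := by
      funext jf
      have hz := claim M0.1 M0.2 jf.val
      have hcz : ∀ t : Fin s, conv σ (ext (Qs.2 t)) (ext (fun jk : Fin k => M0.1 t jk)) jf.val = 0 := by
        intro t
        have : ext (Qs.2 t) = fun _ => (0:F) := by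
          funext u; rw [hall t]; exact ext_zero u
        rw [this]
        exact conv_zero_left σ _ _
      rw [Finset.sum_eq_zero (fun t _ => hcz t), add_zero, ext_lt Qs.1 jf.isLt] at hz
      simpa using hz
    have hQ2 : Qs.2 = 0 := funext fun t => hall t
    exact Prod.ext hQ0 hQ2
  obtain ⟨τ, hτ⟩ := hQτ
  have hQτex : ∃ u, ext (Qs.2 τ) u ≠ 0 := by
    by_contra hc
    push_neg at hc
    apply hτ
    funext u
    have := hc u.val
    rwa [ext_lt _ u.isLt] at this
  -- the K-linear map Φ
  let Φ : (Fin s → Fin k → F) →ₗ[K] (Fin D0 → F) :=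
    { toFun := fun g j => ∑ t, conv σ (ext (Qs.2 t)) (ext (g t)) j.val
      map_add' := by
        intro g h
        funext j
        show _ = (fun j : Fin D0 => ∑ t, conv σ (ext (Qs.2 t)) (ext (g t)) j.val) j
          + (fun j : Fin D0 => ∑ t, conv σ (ext (Qs.2 t)) (ext (h t)) j.val) j
        simp only
        rw [← Finset.sum_add_distrib]
        refine Finset.sum_congr rfl fun t _ => ?_
        have e1 : ext ((g + h) t) = fun v => ext (g t) v + ext (h t) v := by
          funext v
          show ext (g t + h t) v = _
          exact ext_add (g t) (h t) v
        rw [e1, conv_add_right]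
      map_smul' := by
        intro c g
        funext j
        simp only [RingHom.id_apply, Pi.smul_apply]
        rw [Finset.smul_sum]
        refine Finset.sum_congr rfl fun t _ => ?_
        have e1 : ext (c • g t) = fun v => c • ext (g t) v := by
          funext v
          exact ext_smul c (g t) v
        rw [e1, conv_smul_right σ hfix] }
  let y0 : Fin D0 → F := fun j => - ext Qs.1 j.val
  have hsol : ∀ M : Matrix (Fin s) (Fin k) F,
      (s + 1) * wtM K nn (R - codeword σ nn aa β k M) < s * (n - k + 1) →
      Φ (fun t jk => M t jk) = y0 := by
    intro M hM
    funext j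
    have := claim M hM j.val
    show ∑ t, conv σ (ext (Qs.2 t)) (ext (fun jk : Fin k => M t jk)) j.val = - ext Qs.1 j.val
    linear_combination this
  -- injection into the coset
  have card1 : Nat.card {M : Matrix (Fin s) (Fin k) F //
      (s + 1) * wtM K nn (R - codeword σ nn aa β k M) < s * (n - k + 1)}
      ≤ Nat.card {g : Fin s → Fin k → F // Φ g = y0} := by
    refine Nat.card_le_card_of_injective
      (fun M => ⟨fun t jk => M.1 t jk, hsol M.1 M.2⟩) ?_
    intro M M' h
    apply Subtype.ext
    apply Matrix.ext
    intro t jk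
    exact congrFun (congrFun (congrArg Subtype.val h) t) jk
  have hcosetne : Nonempty {g : Fin s → Fin k → F // Φ g = y0} := by
    obtain ⟨M0⟩ := hne
    exact ⟨⟨fun t jk => M0.1 t jk, hsol M0.1 M0.2⟩⟩
  obtain ⟨g0⟩ := hcosetne
  have card2 : Nat.card {g : Fin s → Fin k → F // Φ g = y0}
      ≤ Nat.card (LinearMap.ker Φ) := by
    refine Nat.card_le_card_of_injective
      (fun x => ⟨x.1 - g0.1, by rw [LinearMap.mem_ker, map_sub, x.2, g0.2, sub_self]⟩) ?_
    intro x y h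
    apply Subtype.ext
    have h2 := congrArg Subtype.val h
    simp only at h2
    exact sub_left_injective h2
  -- kernel cardinality
  haveI : Fintype (LinearMap.ker Φ) := Fintype.ofFinite _
  have card3 : Nat.card (LinearMap.ker Φ)
      = q ^ (Module.finrank K (LinearMap.ker Φ)) := by
    rw [Nat.card_eq_fintype_card, Module.card_eq_pow_finrank (K := K), hq]
  -- rank bound
  have hkm : Module.finrank K (Fin k → F) = k * m := by
    rw [Module.finrank_pi_fintype K]
    simp [hm, Finset.sum_const, Finset.card_univ, smul_eq_mul]
  have hdom : Module.finrank K (Fin s → Fin k → F) = s * (k * m) := by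
    rw [Module.finrank_pi_fintype K]
    simp [hkm, Finset.sum_const, Finset.card_univ, smul_eq_mul]
  have hrange_ge : k * m ≤ Module.finrank K (LinearMap.range Φ) := by
    have hcompinj : Function.Injective ⇑(Φ.comp (LinearMap.single K (fun _ : Fin s => Fin k → F) τ)) := by
      rw [← LinearMap.ker_eq_bot]
      rw [LinearMap.ker_eq_bot']
      intro f hf
      by_contra hf0
      have hfev : ∃ v, ext f v ≠ 0 := by
        have : ∃ jk : Fin k, f jk ≠ 0 := by
          by_contra hc
          push_neg at hc
          exact hf0 (funext hc)
        obtain ⟨jk, hjk⟩ := this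
        exact ⟨jk.val, by rwa [ext_lt f jk.isLt, Fin.eta]⟩
      obtain ⟨j, hj2, hjne⟩ := conv_ne σ D1 k (ext (Qs.2 τ)) (ext f)
        (ext_ge _) (ext_ge _) hQτex hfev
      have hjD0 : j < D0 := by omega
      apply hjne
      have hz := congrFun hf ⟨j, hjD0⟩
      have he : (Φ.comp (LinearMap.single K (fun _ : Fin s => Fin k → F) τ)) f ⟨j, hjD0⟩
          = conv σ (ext (Qs.2 τ)) (ext f) j := by
        show ∑ t, conv σ (ext (Qs.2 t)) (ext ((Pi.single τ f : Fin s → Fin k → F) t)) j = _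
        rw [Finset.sum_eq_single_of_mem τ (Finset.mem_univ τ)]
        · rw [Pi.single_eq_same]
        · intro t _ htne
          have hz0 : (Pi.single τ f : Fin s → Fin k → F) t = 0 := Pi.single_eq_of_ne (M := fun _ : Fin s => Fin k → F) htne f
          rw [hz0]
          have e2 : ext (0 : Fin k → F) = fun _ => (0:F) := funext fun v => ext_zero v
          rw [e2, conv_zero_right]
      rw [he] at hz
      exact hz
    have h1 : Module.finrank K
        (LinearMap.range (Φ.comp (LinearMap.single K (fun _ : Fin s => Fin k → F) τ)))
        = k * m := by
      rw [LinearMap.finrank_range_of_inj hcompinj, hkm]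
    have h2 := Submodule.finrank_mono
      (LinearMap.range_comp_le_range (LinearMap.single K (fun _ : Fin s => Fin k → F) τ) Φ)
    omega
  have hrn := LinearMap.finrank_range_add_finrank_ker Φ
  rw [hdom] at hrn
  have hexp : Module.finrank K (LinearMap.ker Φ) ≤ m * k * (s - 1) := by
    have e1 : m * k * (s - 1) = k * m * s - k * m := by
      rw [mul_comm m k, Nat.mul_sub, mul_one]
    have e2 : s * (k * m) = k * m * s := by ring
    omega
  calc Nat.card {M : Matrix (Fin s) (Fin k) F //
      (s + 1) * wtM K nn (R - codeword σ nn aa β k M) < s * (n - k + 1)}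
      ≤ Nat.card (LinearMap.ker Φ) := le_trans card1 card2
    _ = q ^ (Module.finrank K (LinearMap.ker Φ)) := card3
    _ ≤ q ^ (m * k * (s - 1)) := by
        refine Nat.pow_le_pow_right ?_ hexp
        have := Fintype.card_pos (α := K)
        omega

end Main

end Stmt14
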